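/- arXiv:1312.0577 — 3 statements merged into one kernel-verified Lean document; each statement's English description precedes it below -/
import Mathlib

section
/- Let n ∈ ℕ, λ > 0, let A be a real symmetric n×n matrix with A ≥ λ I_n or −A ≥ λ I_n (in the sense of quadratic forms, i.e. ⟨u, Au⟩ ≥ λ‖u‖² for all u, respectively ⟨u, −Au⟩ ≥ λ‖u‖² for all u), and let B be a real antisymmetric n×n matrix (Bᵀ = −B). Then the real symmetric 2n×2n block matrix h̃ = [[A, B],[−B, −A]] has no eigenvalue in the open interval (−λ, λ): every eigenvalue E of h̃ satisfies |E| ≥ λ. -/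
open Matrix

/-- Real case of the spectral gap. -/
lemma real_gap (n : ℕ) (lam : ℝ) (hlam : 0 < lam)
    (A B : Matrix (Fin n) (Fin n) ℝ)
    (hA : A.IsSymm)
    (hAbdd : (∀ u : Fin n → ℝ, lam * (u ⬝ᵥ u) ≤ u ⬝ᵥ A.mulVec u) ∨
             (∀ u : Fin n → ℝ, lam * (u ⬝ᵥ u) ≤ u ⬝ᵥ (-A).mulVec u))
    (hB : Bᵀ = -B) (e : ℝ) (w : (Fin n ⊕ Fin n) → ℝ) (hw : w ≠ 0)
    (heig : (Matrix.fromBlocks A B (-B) (-A)).mulVec w = e • w) :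
    lam ≤ |e| := by
  set x := w ∘ Sum.inl with hx
  set y := w ∘ Sum.inr with hy
  rw [fromBlocks_mulVec] at heig
  have h1 : A.mulVec x + B.mulVec y = e • x := by
    funext i; have := congrFun heig (Sum.inl i); simpa [hx, hy] using this
  have h2 : (-B).mulVec x + (-A).mulVec y = e • y := by
    funext i; have := congrFun heig (Sum.inr i); simpa [hx, hy] using this
  -- cross terms cancel
  have hcross : x ⬝ᵥ B.mulVec y = -(y ⬝ᵥ B.mulVec x) := by
    have hBB : B = -Bᵀ := by rw [hB, neg_neg]
    conv_lhs => rw [dotProduct_mulVec, hBB, vecMul_neg, vecMul_transpose, neg_dotProduct,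
      dotProduct_comm]
  have e1 : x ⬝ᵥ A.mulVec x + x ⬝ᵥ B.mulVec y = e * (x ⬝ᵥ x) := by
    have := congrArg (fun u => x ⬝ᵥ u) h1
    simpa [dotProduct_add, dotProduct_smul, smul_eq_mul] using this
  have e2 : -(y ⬝ᵥ B.mulVec x) - y ⬝ᵥ A.mulVec y = e * (y ⬝ᵥ y) := by
    have := congrArg (fun u => y ⬝ᵥ u) h2
    simpa [dotProduct_add, dotProduct_smul, smul_eq_mul, neg_mulVec, dotProduct_neg, sub_eq_add_neg] using this
  have key : x ⬝ᵥ A.mulVec x + y ⬝ᵥ A.mulVec y = e * (x ⬝ᵥ x - y ⬝ᵥ y) := by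
    have := congrArg₂ (· - ·) e1 e2
    simp only [hcross] at this
    ring_nf at this ⊢
    linarith [this]
  have hsnn : ∀ (u : Fin n → ℝ), 0 ≤ u ⬝ᵥ u := fun u =>
    Finset.sum_nonneg fun i _ => mul_self_nonneg _
  have hsnn2 : ∀ (u : Fin n ⊕ Fin n → ℝ), 0 ≤ u ⬝ᵥ u := fun u =>
    Finset.sum_nonneg fun i _ => mul_self_nonneg _
  have hxx : 0 ≤ x ⬝ᵥ x := hsnn x
  have hyy : 0 ≤ y ⬝ᵥ y := hsnn y
  have hww : x ⬝ᵥ x + y ⬝ᵥ y = w ⬝ᵥ w := by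
    simp [dotProduct, Fintype.sum_sum_type, hx, hy]
  have hwpos : 0 < w ⬝ᵥ w := by
    rcases lt_or_eq_of_le (hsnn2 w) with h | h
    · exact h
    · exact absurd (dotProduct_self_eq_zero.mp h.symm) hw
  have hrhs : e * (x ⬝ᵥ x - y ⬝ᵥ y) ≤ |e| * (w ⬝ᵥ w) := by
    calc e * (x ⬝ᵥ x - y ⬝ᵥ y) ≤ |e * (x ⬝ᵥ x - y ⬝ᵥ y)| := le_abs_self _
    _ = |e| * |x ⬝ᵥ x - y ⬝ᵥ y| := abs_mul _ _
    _ ≤ |e| * (w ⬝ᵥ w) := by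
        apply mul_le_mul_of_nonneg_left _ (abs_nonneg e)
        rw [← hww]; rw [abs_le]; constructor <;> linarith
  have hmain : lam * (w ⬝ᵥ w) ≤ |e| * (w ⬝ᵥ w) := by
    rcases hAbdd with h | h
    · calc lam * (w ⬝ᵥ w) = lam * (x ⬝ᵥ x) + lam * (y ⬝ᵥ y) := by rw [← hww]; ring
      _ ≤ x ⬝ᵥ A.mulVec x + y ⬝ᵥ A.mulVec y := add_le_add (h x) (h y)
      _ = e * (x ⬝ᵥ x - y ⬝ᵥ y) := key
      _ ≤ |e| * (w ⬝ᵥ w) := hrhs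
    · have hrhs' : (-e) * (x ⬝ᵥ x - y ⬝ᵥ y) ≤ |e| * (w ⬝ᵥ w) := by
        calc (-e) * (x ⬝ᵥ x - y ⬝ᵥ y) ≤ |(-e) * (x ⬝ᵥ x - y ⬝ᵥ y)| := le_abs_self _
        _ = |e| * |x ⬝ᵥ x - y ⬝ᵥ y| := by rw [abs_mul, abs_neg]
        _ ≤ |e| * (w ⬝ᵥ w) := by
            apply mul_le_mul_of_nonneg_left _ (abs_nonneg e)
            rw [← hww]; rw [abs_le]; constructor <;> linarith
      calc lam * (w ⬝ᵥ w) = lam * (x ⬝ᵥ x) + lam * (y ⬝ᵥ y) := by rw [← hww]; ring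
      _ ≤ x ⬝ᵥ (-A).mulVec x + y ⬝ᵥ (-A).mulVec y := add_le_add (h x) (h y)
      _ = (-e) * (x ⬝ᵥ x - y ⬝ᵥ y) := by
          simp only [neg_mulVec, dotProduct_neg]; linarith [key]
      _ ≤ |e| * (w ⬝ᵥ w) := hrhs'
  exact le_of_mul_le_mul_right (by linarith [hmain]) hwpos

/-- If `A` is real symmetric with `A ≥ λ` or `−A ≥ λ` (as quadratic
forms, `λ > 0`) and `B` is real antisymmetric, then every eigenvalue `E` of the symmetric
block matrix `h̃ = [[A,B],[−B,−A]]` satisfies `|E| ≥ λ`. -/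
theorem block_matrix_spectral_gap (n : ℕ) (lam : ℝ) (hlam : 0 < lam)
    (A B : Matrix (Fin n) (Fin n) ℝ)
    (hA : A.IsSymm)
    (hAbdd : (∀ u : Fin n → ℝ, lam * (u ⬝ᵥ u) ≤ u ⬝ᵥ A.mulVec u) ∨
             (∀ u : Fin n → ℝ, lam * (u ⬝ᵥ u) ≤ u ⬝ᵥ (-A).mulVec u))
    (hB : Bᵀ = -B) :
    ∀ E : ℂ, ∀ v : (Fin n ⊕ Fin n) → ℂ, v ≠ 0 →
      ((Matrix.fromBlocks A B (-B) (-A)).map (fun x : ℝ => (x : ℂ))).mulVec v = E • v →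
      lam ≤ ‖E‖ := by
  intro E v hv heig
  set M : Matrix (Fin n ⊕ Fin n) (Fin n ⊕ Fin n) ℝ := Matrix.fromBlocks A B (-B) (-A) with hM
  -- M is symmetric
  have hMsymm : Mᵀ = M := by
    rw [hM, fromBlocks_transpose, hA.eq, hB, transpose_neg, transpose_neg, hB, hA.eq, neg_neg]
  set Mc : Matrix (Fin n ⊕ Fin n) (Fin n ⊕ Fin n) ℂ := M.map (fun x : ℝ => (x : ℂ)) with hMc
  have hMcH : Mcᴴ = Mc := by
    have h0 : Mcᴴ = Mᵀ.map (fun x : ℝ => (x : ℂ)) := by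
      ext i j; simp [hMc, conjTranspose_apply, Matrix.map_apply]
    rw [h0, hMsymm]
  -- E is real
  have ht : (star v) ⬝ᵥ v ≠ 0 := by
    rw [dotProduct_comm]
    open ComplexOrder in
    exact fun h => hv (dotProduct_self_star_eq_zero.mp h)
  have hstart : ∀ u : (Fin n ⊕ Fin n) → ℂ, star ((star v) ⬝ᵥ u) = (star u) ⬝ᵥ v := by
    intro u; simp [dotProduct, mul_comm]
  have h1 : (star v) ⬝ᵥ Mc.mulVec v = E * ((star v) ⬝ᵥ v) := by
    rw [heig, dotProduct_smul, smul_eq_mul]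
  have hs : star (E * ((star v) ⬝ᵥ v)) = E * ((star v) ⬝ᵥ v) := by
    conv_lhs => rw [← h1, hstart, star_mulVec, hMcH, ← dotProduct_mulVec]
    exact h1
  have htstar : star ((star v) ⬝ᵥ v) = (star v) ⬝ᵥ v := by
    rw [hstart]
  have hEreal : (starRingEnd ℂ) E = E := by
    rw [star_mul', htstar] at hs
    exact mul_right_cancel₀ ht hs
  have hEim : E.im = 0 := Complex.conj_eq_iff_im.mp hEreal
  -- real eigen equations
  have hcomp : ∀ i, (∑ j, ((M i j : ℂ) * v j)) = E * v i := by
    intro i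
    have := congrFun heig i
    simpa [hMc, Matrix.mulVec, dotProduct, Matrix.map_apply, Pi.smul_apply, smul_eq_mul] using this
  have hre : M.mulVec (fun j => (v j).re) = E.re • (fun j => (v j).re) := by
    funext i
    have := congrArg Complex.re (hcomp i)
    simp only [Complex.re_sum, Complex.mul_re, Complex.ofReal_re, Complex.ofReal_im,
      zero_mul, sub_zero, hEim, zero_mul] at this
    simpa [Matrix.mulVec, dotProduct, Pi.smul_apply, smul_eq_mul, hEim] using this
  have him : M.mulVec (fun j => (v j).im) = E.re • (fun j => (v j).im) := by
    funext i
    have := congrArg Complex.im (hcomp i)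
    simp only [Complex.im_sum, Complex.mul_im, Complex.ofReal_re, Complex.ofReal_im,
      zero_mul, add_zero, hEim, mul_zero] at this
    simpa [Matrix.mulVec, dotProduct, Pi.smul_apply, smul_eq_mul, hEim] using this
  have hne : (fun j => (v j).re) ≠ 0 ∨ (fun j => (v j).im) ≠ 0 := by
    by_contra h
    push_neg at h
    apply hv
    funext j
    have h1 := congrFun h.1 j
    have h2 := congrFun h.2 j
    simp only [Pi.zero_apply] at h1 h2 ⊢
    exact Complex.ext h1 h2
  have hgap : lam ≤ |E.re| := by
    rcases hne with h | h
    · exact real_gap n lam hlam A B hA hAbdd hB E.re _ h hre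
    · exact real_gap n lam hlam A B hA hAbdd hB E.re _ h him
  exact hgap.trans (Complex.abs_re_le_norm E)
end

section
/- Let n ∈ ℕ and let h_n^{Ising} be the effective one-particle Hamiltonian of the Ising chain, i.e. the 2n×2n block Jacobi matrix h_n with μ_j = 1 and γ_j = 1 for all j and real field values ν_1,…,ν_n. Let U = (1/√2)[[1,1],[1,−1]] (so U = U^{−1}) and let 𝒰 be the block diagonal 2n×2n matrix ⊕_{j=1}^n U. Then 𝒰 h_n^{Ising} 𝒰^{−1} equals the tridiagonal 2n×2n Jacobi matrix with zero diagonal and off-diagonal entries, in order, ν_1, −2, ν_2, −2, …, −2, ν_n; that is, its (2j−1, 2j) and (2j, 2j−1) entries equal ν_j for 1 ≤ j ≤ n, its (2j, 2j+1) and (2j+1, 2j) entries equal −2 for 1 ≤ j ≤ n−1, and all other entries vanish. -/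
open scoped Matrix ComplexOrder
open MeasureTheory ProbabilityTheory

noncomputable section

/-- operator norm of a matrix, viewed as an operator on Euclidean space -/
def opNorm {𝕜 : Type*} [RCLike 𝕜] {m : Type*} [Fintype m] [DecidableEq m]
    (M : Matrix m m 𝕜) : ℝ :=
  ‖(Matrix.toEuclideanLin M).toContinuousLinearMap‖

/-- Pauli matrices -/
def σX : Matrix (Fin 2) (Fin 2) ℂ := !![0, 1; 1, 0]
def σY : Matrix (Fin 2) (Fin 2) ℂ := !![0, -Complex.I; Complex.I, 0]
def σZ : Matrix (Fin 2) (Fin 2) ℂ := !![1, 0; 0, -1]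

/-- the operator on `⊗_{i=1}^n ℂ²` acting as the `2×2` matrix `a` in the `j`-th factor
(0-based) and as the identity in all other factors; the identity if `j ≥ n`. -/
def localOp (n j : ℕ) (a : Matrix (Fin 2) (Fin 2) ℂ) :
    Matrix (Fin n → Fin 2) (Fin n → Fin 2) ℂ :=
  Matrix.of fun f g =>
    if h : j < n then
      (if ∀ i, i ≠ ⟨j, h⟩ → f i = g i then a (f ⟨j, h⟩) (g ⟨j, h⟩) else 0)
    else (if f = g then 1 else 0)

/-- `A ∈ 𝒜_j` : `A` acts only on the `j`-th spin (0-based `j`). -/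
def IsLocalAt (n j : ℕ) (A : Matrix (Fin n → Fin 2) (Fin n → Fin 2) ℂ) : Prop :=
  ∃ a : Matrix (Fin 2) (Fin 2) ℂ, A = localOp n j a

/-- XY chain Hamiltonian; the coefficients `μ γ ν : ℕ → ℝ` are 0-based
(`μ 0` is the paper's `μ_1`, etc.). -/
def XYHam (n : ℕ) (μ γ ν : ℕ → ℝ) :
    Matrix (Fin n → Fin 2) (Fin n → Fin 2) ℂ :=
  (∑ j ∈ Finset.range (n - 1), (μ j : ℂ) •
      (((1 + γ j : ℝ) : ℂ) • (localOp n j σX * localOp n (j+1) σX)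
        + ((1 - γ j : ℝ) : ℂ) • (localOp n j σY * localOp n (j+1) σY)))
  + ∑ j ∈ Finset.range n, (ν j : ℂ) • localOp n j σZ

/-- Heisenberg dynamics `τ_t(A) = e^{itH} A e^{-itH}` -/
def heis {m : Type*} [Fintype m] [DecidableEq m] (H A : Matrix m m ℂ) (t : ℝ) :
    Matrix m m ℂ :=
  NormedSpace.exp ((Complex.I * t) • H) * A * NormedSpace.exp (-(Complex.I * t) • H)

def Jmat : Matrix (Fin 2) (Fin 2) ℂ := !![1, 0; 0, -1]
def Smat (γ : ℝ) : Matrix (Fin 2) (Fin 2) ℂ := !![1, (γ : ℂ); (-γ : ℝ), -1]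

/-- effective one-particle Hamiltonian `h_n`, a `2n×2n` block Jacobi matrix,
indexed by `Fin n × Fin 2`; coefficients 0-based. -/
def effHam (n : ℕ) (μ γ ν : ℕ → ℝ) :
    Matrix (Fin n × Fin 2) (Fin n × Fin 2) ℂ :=
  Matrix.of fun p q =>
    if p.1 = q.1 then (ν p.1 : ℂ) * Jmat p.2 q.2
    else if (q.1 : ℕ) = p.1 + 1 then -(μ p.1 : ℂ) * Smat (γ p.1) p.2 q.2
    else if (p.1 : ℕ) = q.1 + 1 then -(μ q.1 : ℂ) * (Smat (γ q.1))ᵀ p.2 q.2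
    else 0

/-- the `(j,k)`-th `2×2` block of a `2n×2n` matrix -/
def blockEntry {n : ℕ} (M : Matrix (Fin n × Fin 2) (Fin n × Fin 2) ℂ) (j k : Fin n) :
    Matrix (Fin 2) (Fin 2) ℂ :=
  Matrix.of fun a b => M (j, a) (k, b)

/-- `f(M)` for a Hermitian matrix `M` via the spectral theorem (junk value `0` in the
impossible case that `M` is not Hermitian). -/
def matFun {m : Type*} [Fintype m] [DecidableEq m] (f : ℝ → ℂ) (M : Matrix m m ℂ) :
    Matrix m m ℂ :=
  if h : M.IsHermitian then
    (h.eigenvectorUnitary : Matrix m m ℂ) * Matrix.diagonal (fun i => f (h.eigenvalues i))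
      * (star h.eigenvectorUnitary : Matrix m m ℂ)
  else 0

end

/-- the `2×2` Hadamard-type unitary `U = (1/√2)[[1,1],[1,−1]]` -/
noncomputable def U2 : Matrix (Fin 2) (Fin 2) ℂ :=
  ((Real.sqrt 2 : ℝ) : ℂ)⁻¹ • !![1, 1; 1, -1]

lemma sqrt2C : ((Real.sqrt 2 : ℝ) : ℂ) * ((Real.sqrt 2 : ℝ) : ℂ) = 2 := by
  rw [← Complex.ofReal_mul, Real.mul_self_sqrt (by norm_num)]
  norm_num

lemma sqrt2_ne : ((Real.sqrt 2 : ℝ) : ℂ) ≠ 0 := by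
  simpa using Real.sqrt_ne_zero'.2 (by norm_num)

lemma U2_mul_U2 : U2 * U2 = 1 := by
  ext i j
  fin_cases i <;> fin_cases j <;>
    simp [U2, Matrix.mul_apply, Fin.sum_univ_two, Matrix.one_apply] <;>
    field_simp <;>
    first
      | linear_combination sqrt2C
      | linear_combination (-1:ℂ)*sqrt2C
      | linear_combination (2:ℂ)*sqrt2C
      | linear_combination (-2:ℂ)*sqrt2C

noncomputable def Ubig (n : ℕ) : Matrix (Fin n × Fin 2) (Fin n × Fin 2) ℂ :=
  Matrix.of fun p q => if p.1 = q.1 then U2 p.2 q.2 else 0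

lemma mulU {n : ℕ} (N : Matrix (Fin n × Fin 2) (Fin n × Fin 2) ℂ)
    (p : Fin n × Fin 2) (k : Fin n) (b : Fin 2) :
    (N * Ubig n) p (k, b) = ∑ b', N p (k, b') * U2 b' b := by
  rw [Matrix.mul_apply, Fintype.sum_prod_type, Finset.sum_comm]
  refine Finset.sum_congr rfl fun b' _ => ?_
  simp only [Ubig, Matrix.of_apply, mul_ite, mul_zero]
  rw [Finset.sum_ite_eq']
  simp

lemma Umul {n : ℕ} (M : Matrix (Fin n × Fin 2) (Fin n × Fin 2) ℂ)
    (j : Fin n) (a : Fin 2) (q : Fin n × Fin 2) :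
    (Ubig n * M) (j, a) q = ∑ a', U2 a a' * M (j, a') q := by
  rw [Matrix.mul_apply, Fintype.sum_prod_type, Finset.sum_comm]
  refine Finset.sum_congr rfl fun a' _ => ?_
  simp only [Ubig, Matrix.of_apply, ite_mul, zero_mul]
  rw [Finset.sum_ite_eq]
  simp

lemma Ubig_mul_Ubig (n : ℕ) : Ubig n * Ubig n = 1 := by
  ext ⟨j, a⟩ ⟨k, b⟩
  rw [mulU]
  by_cases hjk : j = k
  · subst hjk
    have h := congrFun (congrFun U2_mul_U2 a) b
    rw [Matrix.mul_apply] at h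
    simpa [Ubig, Matrix.one_apply, Prod.ext_iff] using h
  · simp [Ubig, hjk, Matrix.one_apply, Prod.ext_iff]

lemma conj_entry {n : ℕ} (M : Matrix (Fin n × Fin 2) (Fin n × Fin 2) ℂ)
    (j k : Fin n) (a b : Fin 2) :
    (Ubig n * M * Ubig n) (j, a) (k, b)
      = ∑ b', (∑ a', U2 a a' * M (j, a') (k, b')) * U2 b' b := by
  rw [mulU]
  exact Finset.sum_congr rfl fun b' _ => by rw [Umul]

/-- Conjugating the effective one-particle Hamiltonian of the Ising
chain (`μ_j = γ_j = 1`) by `𝒰 = ⊕_j U` yields the tridiagonal Jacobi matrix with zero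
diagonal and off-diagonal entries `ν_1, −2, ν_2, −2, …, −2, ν_n`. -/
theorem ising_effective_hamiltonian_transform (n : ℕ) (ν : ℕ → ℝ) :
    U2 = U2⁻¹ ∧
    (Matrix.of fun p q : Fin n × Fin 2 => if p.1 = q.1 then U2 p.2 q.2 else 0) *
        effHam n (fun _ => 1) (fun _ => 1) ν *
        (Matrix.of fun p q : Fin n × Fin 2 => if p.1 = q.1 then U2 p.2 q.2 else 0)⁻¹
      = Matrix.of fun p q : Fin n × Fin 2 =>
          if p.1 = q.1 ∧ p.2 ≠ q.2 then (ν p.1 : ℂ)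
          else if (q.1 : ℕ) = p.1 + 1 ∧ p.2 = 1 ∧ q.2 = 0 then -2
          else if (p.1 : ℕ) = q.1 + 1 ∧ p.2 = 0 ∧ q.2 = 1 then -2
          else 0 := by
  constructor
  · exact (Matrix.inv_eq_right_inv U2_mul_U2).symm
  · have hU : (Matrix.of fun p q : Fin n × Fin 2 =>
        if p.1 = q.1 then U2 p.2 q.2 else 0) = Ubig n := rfl
    rw [hU, Matrix.inv_eq_right_inv (Ubig_mul_Ubig n)]
    ext ⟨j, a⟩ ⟨k, b⟩
    rw [conj_entry]
    simp only [Fin.sum_univ_two, effHam, Matrix.of_apply]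
    by_cases hjk : j = k
    · subst hjk
      have hne : ¬((j:ℕ) = (j:ℕ) + 1) := by omega
      simp only [if_pos rfl, hne, and_false, false_and, if_false, true_and]
      fin_cases a <;> fin_cases b <;>
        simp only [U2, Jmat, Matrix.smul_apply, Matrix.cons_val', Matrix.cons_val_zero,
          Matrix.cons_val_one, Matrix.head_cons, Matrix.head_fin_const, Matrix.empty_val',
          Matrix.cons_val_fin_one, smul_eq_mul, Fin.zero_eta, Fin.mk_one, ne_eq,
          not_true_eq_false, if_false, not_false_eq_true, if_true, Matrix.of_apply,
          zero_ne_one, one_ne_zero] <;>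
        field_simp <;>
        first
          | rfl
          | linear_combination sqrt2C
          | linear_combination (ν j : ℂ) * sqrt2C
          | linear_combination (-(ν j : ℂ)) * sqrt2C
          | linear_combination (2 * (ν j : ℂ)) * sqrt2C
          | linear_combination (-2 * (ν j : ℂ)) * sqrt2C
          | ring1
    · simp only [hjk, false_and, if_false]
      by_cases h1 : (k:ℕ) = (j:ℕ) + 1
      · have h2 : ¬((j:ℕ) = (k:ℕ) + 1) := by omega
        have h2' : ¬((j:ℕ) = (j:ℕ) + 1 + 1) := by omega
        simp only [h1, h2, h2', if_true, true_and, false_and, and_false, if_false]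
        fin_cases a <;> fin_cases b <;>
          simp [U2, Smat] <;> field_simp <;>
          first
            | ring1
            | linear_combination sqrt2C
            | linear_combination (-1:ℂ) * sqrt2C
            | linear_combination (2:ℂ) * sqrt2C
            | linear_combination (-2:ℂ) * sqrt2C
            | linear_combination (4:ℂ) * sqrt2C
            | linear_combination (-4:ℂ) * sqrt2C
      · by_cases h2 : (j:ℕ) = (k:ℕ) + 1
        · have h1' : ¬((k:ℕ) = (k:ℕ) + 1 + 1) := by omega
          simp only [h1, h1', h2, if_false, if_true, true_and, false_and, and_false]
          fin_cases a <;> fin_cases b <;>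
            simp [U2, Smat, Matrix.transpose_apply] <;> field_simp <;>
            first
              | ring1
              | linear_combination sqrt2C
              | linear_combination (-1:ℂ) * sqrt2C
              | linear_combination (2:ℂ) * sqrt2C
              | linear_combination (-2:ℂ) * sqrt2C
              | linear_combination (4:ℂ) * sqrt2C
              | linear_combination (-4:ℂ) * sqrt2C
        · simp [h1, h2]
end

section
/- Let m, k ∈ ℕ, let ψ ∈ ℂ^m ⊗ ℂ^k be a unit vector and let P = |ψ⟩⟨ψ| be the orthogonal projection onto ℂψ. Then the von Neumann entropy of the reduced density matrix P¹ = Tr_2[P] is bounded by the logarithmic negativity of P: S(P¹) ≤ log ‖P^{T_1}‖_1. -/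
open Matrix Polynomial Finset
open scoped Kronecker

namespace VWaux

variable {n : Type*} [Fintype n] [DecidableEq n] {R : Type*} [CommRing R]

lemma charmatrix_conj (U V M : Matrix n n R) (hUV : U * V = 1) :
    charmatrix (U * M * V) = U.map C * charmatrix M * V.map C := by
  have h1 : U.map (C : R →+* R[X]) * V.map C = 1 := by
    rw [← Matrix.map_mul, hUV, Matrix.map_one _ (map_zero C) (map_one C)]
  show Matrix.scalar n X - (C : R →+* R[X]).mapMatrix (U * M * V)
      = U.map C * (Matrix.scalar n X - (C : R →+* R[X]).mapMatrix M) * V.map C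
  simp only [RingHom.mapMatrix_apply]
  rw [Matrix.mul_sub, Matrix.sub_mul, Matrix.map_mul, Matrix.map_mul]
  congr 1
  calc Matrix.scalar n X
      = Matrix.scalar n X * (U.map C * V.map C) := by rw [h1, mul_one]
    _ = U.map C * Matrix.scalar n X * V.map C := by
        rw [← mul_assoc, (Matrix.scalar_commute (X : R[X]) (fun r => Commute.all _ _) (U.map C)).eq]

lemma charpoly_conj (U V M : Matrix n n R) (hUV : U * V = 1) :
    (U * M * V).charpoly = M.charpoly := by
  unfold Matrix.charpoly
  rw [charmatrix_conj U V M hUV, det_mul, det_mul]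
  have h1 : (U.map (C : R →+* R[X])).det * (V.map C).det = 1 := by
    rw [← det_mul, ← Matrix.map_mul, hUV, Matrix.map_one _ (map_zero C) (map_one C), det_one]
  ring_nf
  calc (U.map (C : R →+* R[X])).det * (charmatrix M).det * (V.map C).det
      = (charmatrix M).det * ((U.map (C : R →+* R[X])).det * (V.map C).det) := by ring
    _ = (charmatrix M).det := by rw [h1, mul_one]

lemma charpoly_diagonal (d : n → R) :
    (diagonal d).charpoly = ∏ i, (X - C (d i)) := by
  have h : charmatrix (diagonal d) = diagonal (fun i => X - C (d i)) := by
    apply Matrix.ext; intro i j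
    by_cases h : i = j
    · subst h; simp [charmatrix_apply_eq]
    · rw [charmatrix_apply_ne _ _ _ h]
      simp [diagonal_apply_ne _ h]
  unfold Matrix.charpoly
  rw [h, det_diagonal]


lemma charpoly_zero' : (0 : Matrix n n R).charpoly = X ^ (Fintype.card n) := by
  rw [← Matrix.diagonal_zero, charpoly_diagonal]
  simp [Finset.prod_const, Finset.card_univ]

lemma charpoly_mul_comm_rect {m k : Type*} [Fintype m] [Fintype k] [DecidableEq m] [DecidableEq k]
    (A : Matrix m k R) (B : Matrix k m R) :
    (A * B).charpoly * X ^ (Fintype.card k) = (B * A).charpoly * X ^ (Fintype.card m) := by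
  classical
  set U : Matrix (m ⊕ k) (m ⊕ k) R := fromBlocks 1 A 0 1 with hU
  set V : Matrix (m ⊕ k) (m ⊕ k) R := fromBlocks 1 (-A) 0 1 with hV
  have hVU : V * U = 1 := by
    rw [hV, hU, fromBlocks_multiply]
    simp
  have key : V * (fromBlocks (A * B) 0 B 0) * U = fromBlocks 0 0 B (B * A) := by
    simp [hU, hV, fromBlocks_multiply, Matrix.mul_assoc]
  have h1 := charpoly_conj V U (fromBlocks (A * B) 0 B 0) hVU
  rw [key, Matrix.charpoly_fromBlocks_zero₁₂, Matrix.charpoly_fromBlocks_zero₁₂,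
    charpoly_zero', charpoly_zero'] at h1
  rw [← h1]; ring

lemma hermitian_charpoly_prod {N : Matrix n n ℂ} (hN : N.IsHermitian) :
    N.charpoly = ∏ i, (X - C ((hN.eigenvalues i : ℂ))) := by
  have hU : (hN.eigenvectorUnitary : Matrix n n ℂ) * star (hN.eigenvectorUnitary : Matrix n n ℂ)
      = 1 := (Matrix.mem_unitaryGroup_iff).mp hN.eigenvectorUnitary.2
  conv_lhs => rw [hN.spectral_theorem, Unitary.conjStarAlgAut_apply]
  rw [charpoly_conj _ _ _ hU, charpoly_diagonal]
  rfl

lemma prod_X_sub_C_eq (s : Multiset ℂ) :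
    (s.map fun r => X - C r).prod.roots = s :=
  Polynomial.roots_multiset_prod_X_sub_C s

lemma eig_multiset {N : Matrix n n ℂ} (hN : N.IsHermitian)
    (U V : Matrix n n ℂ) (d : n → ℝ) (hUV : U * V = 1)
    (hdec : N = U * diagonal (fun i => ((d i : ℝ) : ℂ)) * V) :
    (Finset.univ.val.map hN.eigenvalues) = (Finset.univ.val.map d) := by
  have h1 : N.charpoly = ∏ i, (X - C ((d i : ℝ) : ℂ)) := by
    rw [hdec, charpoly_conj U V _ hUV, charpoly_diagonal]
  have h2 := hermitian_charpoly_prod hN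
  have hre : ∀ (a : n → ℝ), (∏ i, (X - C ((a i : ℝ) : ℂ)))
      = ((Finset.univ.val.map (fun i => ((a i : ℝ) : ℂ))).map fun r => X - C r).prod := by
    intro a
    rw [Multiset.map_map]
    rfl
  have h3 : (Finset.univ.val.map (fun i => ((hN.eigenvalues i : ℝ) : ℂ)))
      = Finset.univ.val.map (fun i => ((d i : ℝ) : ℂ)) := by
    have e1 := congrArg Polynomial.roots (h2.symm.trans h1)
    rwa [hre hN.eigenvalues, hre d, prod_X_sub_C_eq, prod_X_sub_C_eq] at e1
  have := Multiset.map_injective (f := fun r : ℝ => (r : ℂ)) Complex.ofReal_injective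
  apply this
  rwa [Multiset.map_map, Multiset.map_map]

lemma sum_f_eig {N : Matrix n n ℂ} (hN : N.IsHermitian)
    (U V : Matrix n n ℂ) (d : n → ℝ) (hUV : U * V = 1)
    (hdec : N = U * diagonal (fun i => ((d i : ℝ) : ℂ)) * V) (f : ℝ → ℝ) :
    ∑ i, f (hN.eigenvalues i) = ∑ i, f (d i) := by
  have h := congrArg (fun s : Multiset ℝ => (s.map f).sum) (eig_multiset hN U V d hUV hdec)
  simpa only [Multiset.map_map, Finset.sum_eq_multiset_sum, Function.comp] using h


open scoped ComplexOrder in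
lemma eig_nonneg_mul_self {m k : Type*} [Fintype m] [Fintype k] [DecidableEq m] [DecidableEq k]
    (A : Matrix m k ℂ) (i : m) :
    0 ≤ (Matrix.isHermitian_mul_conjTranspose_self A).eigenvalues i :=
  (Matrix.posSemidef_self_mul_conjTranspose A).eigenvalues_nonneg i

lemma jensen_step {i : Type*} [Fintype i] (lam : i → ℝ) (h0 : ∀ j, 0 ≤ lam j)
    (h1 : ∑ j, lam j = 1) :
    -∑ j, lam j * Real.log (lam j)
      ≤ Real.log ((∑ j, Real.sqrt (lam j)) * (∑ j, Real.sqrt (lam j))) := by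
  classical
  set s := ∑ j, Real.sqrt (lam j) with hs
  have hsnn : ∀ j, 0 ≤ Real.sqrt (lam j) := fun j => Real.sqrt_nonneg _
  have hspos : 0 < s := by
    obtain ⟨j, hj⟩ : ∃ j, lam j ≠ 0 := by
      by_contra h; push_neg at h
      simp only [h, Finset.sum_const_zero] at h1
      exact zero_ne_one h1
    have hpos : 0 < Real.sqrt (lam j) := Real.sqrt_pos.mpr (lt_of_le_of_ne (h0 j) (Ne.symm hj))
    exact lt_of_lt_of_le hpos (Finset.single_le_sum (fun x _ => hsnn x) (Finset.mem_univ j))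
  set t : Finset i := Finset.univ.filter (fun j => lam j ≠ 0) with ht
  have hmemt : ∀ j ∈ t, 0 < lam j := fun j hj =>
    (h0 j).lt_of_ne (Ne.symm (Finset.mem_filter.mp hj).2)
  have h1t : ∑ j ∈ t, lam j = 1 := by
    rw [← h1]
    exact Finset.sum_filter_ne_zero _
  have hst : ∑ j ∈ t, Real.sqrt (lam j) = s := by
    rw [hs]
    apply Finset.sum_subset (Finset.filter_subset _ _)
    intro j _ hj
    have : lam j = 0 := by
      by_contra hne
      exact hj (Finset.mem_filter.mpr ⟨Finset.mem_univ j, hne⟩)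
    simp [this]
  have key := (strictConcaveOn_log_Ioi.concaveOn).le_map_sum (t := t) (w := lam)
      (p := fun j => (Real.sqrt (lam j))⁻¹) (fun j _ => h0 j) h1t
      (fun j hj => Set.mem_Ioi.mpr (inv_pos.mpr (Real.sqrt_pos.mpr (hmemt j hj))))
  have hL : ∑ j ∈ t, lam j • Real.log ((Real.sqrt (lam j))⁻¹)
      = -(1/2) * ∑ j, lam j * Real.log (lam j) := by
    have hterm : ∀ j ∈ t, lam j • Real.log ((Real.sqrt (lam j))⁻¹)
        = -(1/2) * (lam j * Real.log (lam j)) := by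
      intro j hj
      rw [smul_eq_mul, Real.log_inv, Real.log_sqrt (h0 j)]
      ring
    rw [Finset.sum_congr rfl hterm, ← Finset.mul_sum]
    congr 1
    apply Finset.sum_subset (Finset.filter_subset _ _)
    intro j _ hj
    have : lam j = 0 := by
      by_contra hne
      exact hj (Finset.mem_filter.mpr ⟨Finset.mem_univ j, hne⟩)
    simp [this]
  have hR : ∑ j ∈ t, lam j • (Real.sqrt (lam j))⁻¹ = s := by
    rw [← hst]
    apply Finset.sum_congr rfl
    intro j hj
    have hpos := hmemt j hj
    have hne : Real.sqrt (lam j) ≠ 0 := (Real.sqrt_pos.mpr hpos).ne'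
    rw [smul_eq_mul]
    field_simp
    rw [Real.sq_sqrt (h0 j)]
  rw [hL, hR] at key
  rw [Real.log_mul hspos.ne' hspos.ne']
  linarith


lemma prodrepr {i : Type*} [Fintype i] (a : i → ℝ) : (∏ x, ((X : ℂ[X]) - C ((a x : ℝ) : ℂ)))
    = ((Finset.univ.val.map (fun x => ((a x : ℝ) : ℂ))).map fun r => X - C r).prod := by
  rw [Multiset.map_map]; rfl

lemma sum_sqrt_eig_comm {m k : Type*} [Fintype m] [Fintype k] [DecidableEq m] [DecidableEq k]
    (A : Matrix m k ℂ) :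
    ∑ i, Real.sqrt ((isHermitian_mul_conjTranspose_self A).eigenvalues i)
      = ∑ j, Real.sqrt ((isHermitian_conjTranspose_mul_self A).eigenvalues j) := by
  have hcp := charpoly_mul_comm_rect A Aᴴ
  rw [hermitian_charpoly_prod (isHermitian_mul_conjTranspose_self A),
      hermitian_charpoly_prod (isHermitian_conjTranspose_mul_self A)] at hcp
  set lam := (isHermitian_mul_conjTranspose_self A).eigenvalues with hlam
  set mu := (isHermitian_conjTranspose_mul_self A).eigenvalues with hmu
  have hX : ∀ c : ℕ, ((Multiset.replicate c (0 : ℂ)).map fun r => (X : ℂ[X]) - C r).prod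
      = (X : ℂ[X]) ^ c := by
    intro c
    simp [Multiset.map_replicate, Multiset.prod_replicate]
  have e1 : (((Finset.univ.val.map fun i => ((lam i : ℝ) : ℂ))
        + Multiset.replicate (Fintype.card k) 0).map fun r => X - C r).prod
      = (((Finset.univ.val.map fun j => ((mu j : ℝ) : ℂ))
        + Multiset.replicate (Fintype.card m) 0).map fun r => X - C r).prod := by
    rw [Multiset.map_add, Multiset.prod_add, Multiset.map_add, Multiset.prod_add,
      ← prodrepr lam, ← prodrepr mu, hX, hX]
    exact hcp
  have e2 := congrArg Polynomial.roots e1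
  rw [prod_X_sub_C_eq, prod_X_sub_C_eq] at e2
  have e3 := congrArg (fun s : Multiset ℂ => (s.map fun z => Real.sqrt z.re).sum) e2
  simp only [Multiset.map_add, Multiset.sum_add, Multiset.map_map, Multiset.map_replicate,
    Function.comp, Complex.ofReal_re, Complex.zero_re, Real.sqrt_zero, Multiset.sum_replicate,
    smul_zero, add_zero] at e3
  simpa only [Finset.sum_eq_multiset_sum, Multiset.map_map, Function.comp] using e3

end VWaux


noncomputable section

/-- the von Neumann entropy `S(ρ) = −Σ λ_ℓ log λ_ℓ` of a Hermitian matrix, via its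
eigenvalues (junk value `0` if `ρ` is not Hermitian; note `Real.log 0 = 0`, which encodes
the convention `0 log 0 = 0`). -/
def vnEntropy {m : Type*} [Fintype m] [DecidableEq m] (ρ : Matrix m m ℂ) : ℝ :=
  if h : ρ.IsHermitian then -∑ i, h.eigenvalues i * Real.log (h.eigenvalues i) else 0

/-- the trace norm `‖M‖₁ = Tr √(M^* M)`, the sum of the singular values of `M` -/
def traceNorm {m : Type*} [Fintype m] [DecidableEq m] (M : Matrix m m ℂ) : ℝ :=
  ∑ i, Real.sqrt ((Matrix.isHermitian_conjTranspose_mul_self M).eigenvalues i)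

/-- the partial trace over the second tensor factor -/
def ptrace2 {m k : Type*} [Fintype m] [Fintype k]
    (M : Matrix (m × k) (m × k) ℂ) : Matrix m m ℂ :=
  Matrix.of fun i j => ∑ α, M (i, α) (j, α)

/-- the partial transpose in the first tensor factor -/
def ptranspose {m k : Type*} (M : Matrix (m × k) (m × k) ℂ) : Matrix (m × k) (m × k) ℂ :=
  Matrix.of fun p q => M (q.1, p.2) (p.1, q.2)

end

/-- **Lemma 3.7 (Statement 15, Vidal–Werner bound).** For a unit vector
`ψ ∈ ℂ^m ⊗ ℂ^k` with rank-one projection `P = |ψ⟩⟨ψ|`, the von Neumann entropy of the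
reduced density matrix `P¹ = Tr_2 P` is bounded by the logarithmic negativity:
`S(P¹) ≤ log ‖P^{T_1}‖₁`. -/
theorem entanglement_entropy_le_log_negativity (m k : ℕ)
    (ψ : Fin m × Fin k → ℂ) (hψ : dotProduct (star ψ) ψ = 1) :
    vnEntropy (ptrace2 (Matrix.of fun p q : Fin m × Fin k => ψ p *star (ψ q)))
      ≤ Real.log (traceNorm (ptranspose (Matrix.of fun p q : Fin m × Fin k => ψ p * star (ψ q)))) := by
  classical
  open VWaux Matrix Polynomial in
  set A : Matrix (Fin m) (Fin k) ℂ := Matrix.of fun i α => ψ (i, α) with hA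
  set P : Matrix (Fin m × Fin k) (Fin m × Fin k) ℂ :=
    Matrix.of fun p q : Fin m × Fin k => ψ p * star (ψ q) with hP
  have hptr : ptrace2 P = A * Aᴴ := by
    apply Matrix.ext; intro i j
    simp [ptrace2, Matrix.mul_apply, Matrix.conjTranspose_apply, hA, hP]
  rw [hptr]
  have hrho : (A * Aᴴ).IsHermitian := Matrix.isHermitian_mul_conjTranspose_self A
  have htau : (Aᴴ * A).IsHermitian := Matrix.isHermitian_conjTranspose_mul_self A
  have hvn : vnEntropy (A * Aᴴ) = -∑ i, hrho.eigenvalues i * Real.log (hrho.eigenvalues i) := by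
    simp only [vnEntropy]
    rw [dif_pos hrho]
  have hl0 : ∀ i, 0 ≤ hrho.eigenvalues i := fun i => VWaux.eig_nonneg_mul_self A i
  have hUa : (hrho.eigenvectorUnitary : Matrix (Fin m) (Fin m) ℂ)
      * star (hrho.eigenvectorUnitary : Matrix (Fin m) (Fin m) ℂ) = 1 :=
    (Matrix.mem_unitaryGroup_iff).mp hrho.eigenvectorUnitary.2
  have hUb : (htau.eigenvectorUnitary : Matrix (Fin k) (Fin k) ℂ)
      * star (htau.eigenvectorUnitary : Matrix (Fin k) (Fin k) ℂ) = 1 :=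
    (Matrix.mem_unitaryGroup_iff).mp htau.eigenvectorUnitary.2
  have htr2 : (A * Aᴴ).trace = ∑ i, ((hrho.eigenvalues i : ℝ) : ℂ) := by
    conv_lhs => rw [hrho.spectral_theorem, Unitary.conjStarAlgAut_apply]
    rw [Matrix.trace_mul_cycle, mul_eq_one_comm.mp hUa, one_mul, Matrix.trace_diagonal]
    rfl
  have htr1 : (A * Aᴴ).trace = 1 := by
    rw [← hψ]
    simp only [Matrix.trace, Matrix.diag, Matrix.mul_apply, Matrix.conjTranspose_apply, hA,
      Matrix.of_apply, dotProduct, Pi.star_apply]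
    conv_rhs => rw [Fintype.sum_prod_type]
    exact Finset.sum_congr rfl fun i _ => Finset.sum_congr rfl fun a _ => mul_comm _ _
  have hsum1 : ∑ i, hrho.eigenvalues i = 1 := by
    have h := htr2.symm.trans htr1
    exact_mod_cast h
  set M := ptranspose P with hM
  have hkron : Mᴴ * M = Matrix.kroneckerMap (· * ·)
      ((A * Aᴴ).map (starRingEnd ℂ)) ((Aᴴ * A).map (starRingEnd ℂ)) := by
    apply Matrix.ext; rintro ⟨i, α⟩ ⟨j, β⟩
    simp only [Matrix.mul_apply, Matrix.conjTranspose_apply, hM, ptranspose, hP, hA,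
      Matrix.kroneckerMap_apply, Matrix.map_apply, Matrix.of_apply, Fintype.sum_prod_type]
    rw [Finset.sum_comm, map_sum, map_sum, Finset.sum_mul_sum]
    apply Finset.sum_congr rfl; intro γ _
    apply Finset.sum_congr rfl; intro l _
    simp only [StarMul.star_mul, star_star, starRingEnd_apply]
    ring
  have hC1 : (A * Aᴴ).map (starRingEnd ℂ)
      = (hrho.eigenvectorUnitary : Matrix (Fin m) (Fin m) ℂ).map (starRingEnd ℂ)
        * Matrix.diagonal (fun i => ((hrho.eigenvalues i : ℝ) : ℂ))
        * (star (hrho.eigenvectorUnitary : Matrix (Fin m) (Fin m) ℂ)).map (starRingEnd ℂ) := by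
    conv_lhs => rw [hrho.spectral_theorem, Unitary.conjStarAlgAut_apply]
    rw [Matrix.map_mul, Matrix.map_mul, Matrix.diagonal_map (map_zero _)]
    have hfun : (fun i => (starRingEnd ℂ) ((RCLike.ofReal ∘ hrho.eigenvalues) i))
        = fun i => ((hrho.eigenvalues i : ℝ) : ℂ) := funext fun i => Complex.conj_ofReal _
    rw [hfun]
  have hC2 : (Aᴴ * A).map (starRingEnd ℂ)
      = (htau.eigenvectorUnitary : Matrix (Fin k) (Fin k) ℂ).map (starRingEnd ℂ)
        * Matrix.diagonal (fun i => ((htau.eigenvalues i : ℝ) : ℂ))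
        * (star (htau.eigenvectorUnitary : Matrix (Fin k) (Fin k) ℂ)).map (starRingEnd ℂ) := by
    conv_lhs => rw [htau.spectral_theorem, Unitary.conjStarAlgAut_apply]
    rw [Matrix.map_mul, Matrix.map_mul, Matrix.diagonal_map (map_zero _)]
    have hfun : (fun i => (starRingEnd ℂ) ((RCLike.ofReal ∘ htau.eigenvalues) i))
        = fun i => ((htau.eigenvalues i : ℝ) : ℂ) := funext fun i => Complex.conj_ofReal _
    rw [hfun]
  set W : Matrix (Fin m × Fin k) (Fin m × Fin k) ℂ := Matrix.kroneckerMap (· * ·)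
      ((hrho.eigenvectorUnitary : Matrix (Fin m) (Fin m) ℂ).map (starRingEnd ℂ))
      ((htau.eigenvectorUnitary : Matrix (Fin k) (Fin k) ℂ).map (starRingEnd ℂ)) with hW
  set W' : Matrix (Fin m × Fin k) (Fin m × Fin k) ℂ := Matrix.kroneckerMap (· * ·)
      ((star (hrho.eigenvectorUnitary : Matrix (Fin m) (Fin m) ℂ)).map (starRingEnd ℂ))
      ((star (htau.eigenvectorUnitary : Matrix (Fin k) (Fin k) ℂ)).map (starRingEnd ℂ)) with hW'
  have hWW' : W * W' = 1 := by
    rw [hW, hW', ← Matrix.mul_kronecker_mul, ← Matrix.map_mul, ← Matrix.map_mul, hUa, hUb]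
    rw [Matrix.map_one _ (map_zero _) (map_one _), Matrix.map_one _ (map_zero _) (map_one _)]
    rw [Matrix.one_kronecker_one]
  have hdec : Mᴴ * M = W * Matrix.diagonal
      (fun p : Fin m × Fin k =>
        (((hrho.eigenvalues p.1 * htau.eigenvalues p.2 : ℝ)) : ℂ)) * W' := by
    rw [hkron, hC1, hC2, Matrix.mul_kronecker_mul, Matrix.mul_kronecker_mul,
      Matrix.diagonal_kronecker_diagonal, hW, hW']
    rw [Matrix.mul_assoc, ← Matrix.mul_assoc]
    congr 2
    funext p
    push_cast
    rfl
  have htn : traceNorm M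
      = (∑ i, Real.sqrt (hrho.eigenvalues i)) * (∑ i, Real.sqrt (hrho.eigenvalues i)) := by
    have hs := VWaux.sum_f_eig (Matrix.isHermitian_conjTranspose_mul_self M) W W'
        (fun p => hrho.eigenvalues p.1 * htau.eigenvalues p.2) hWW' hdec Real.sqrt
    simp only [traceNorm]
    rw [hs, Fintype.sum_prod_type]
    simp_rw [Real.sqrt_mul (hl0 _)]
    rw [← Finset.sum_mul_sum]
    rw [← VWaux.sum_sqrt_eig_comm A]
  rw [hvn, htn]
  exact VWaux.jensen_step hrho.eigenvalues hl0 hsum1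
end
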